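/- Let G be a multigraph and let G' be obtained from G by a Δ-YY transformation. Then α(G) ≤ α(G') ≤ α(G) + 2, where α denotes the maximum size of an independent set. -/

import Mathlib

open scoped Classical

noncomputable section

/-- A multigraph: a finite vertex type together with a symmetric multiplicity
function recording the size of the connection (set of parallel edges) between
any two vertices; there are no loops. -/
structure MG : Type 1 where
  V : Type
  fin : Fintype V
  mult : V → V → ℕ
  symm : ∀ u v, mult u v = mult v u
  loopless : ∀ v, mult v v = 0

namespace MG

/-- Two vertices are adjacent when their connection is non-empty. -/
def Adj (G : MG) (u v : G.V) : Prop := 0 < G.mult u v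

/-- Connection size as a function on unordered pairs of vertices. -/
def multS (G : MG) : Sym2 G.V → ℕ := Sym2.lift ⟨G.mult, G.symm⟩

/-- Number of vertices. -/
def order (G : MG) : ℕ := @Fintype.card G.V G.fin

/-- Degree of a vertex, counting edges with multiplicity. -/
def deg (G : MG) (v : G.V) : ℕ :=
  haveI := G.fin
  ∑ u, G.mult v u

/-- `G` is `k`-regular. -/
def Regular (G : MG) (k : ℕ) : Prop := ∀ v, G.deg v = k

/-- A simple graph: every connection has size at most 1. -/
def Simple (G : MG) : Prop := ∀ u v, G.mult u v ≤ 1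

/-- Isomorphism of multigraphs. -/
def Iso (G H : MG) : Prop :=
  ∃ e : G.V ≃ H.V, ∀ u v, H.mult (e u) (e v) = G.mult u v

/-- Indicator: is `{a,b}` one of the three pairs `{u,v}, {u,w}, {v,w}`? -/
def triCount {V : Type} (u v w a b : V) : ℕ :=
  if s(a, b) ∈ ({s(u, v), s(u, w), s(v, w)} : Set (Sym2 V)) then 1 else 0

lemma triCount_symm {V : Type} (u v w a b : V) :
    triCount u v w a b = triCount u v w b a := by
  unfold triCount
  have h : s(a, b) = s(b, a) := Sym2.eq_swap
  rw [h]

/-- `u, v, w` form a delta (triangle): pairwise distinct and pairwise adjacent. -/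
def IsDelta (G : MG) (u v w : G.V) : Prop :=
  u ≠ v ∧ u ≠ w ∧ v ≠ w ∧ G.Adj u v ∧ G.Adj u w ∧ G.Adj v w

/-- `x` is the centre of a wye with external vertices `u, v, w`: the edges
incident to `x` are exactly two parallel edges to each of `u, v, w`. -/
def IsWye (G : MG) (x u v w : G.V) : Prop :=
  u ≠ v ∧ u ≠ w ∧ v ≠ w ∧ x ≠ u ∧ x ≠ v ∧ x ≠ w ∧
    G.mult x u = 2 ∧ G.mult x v = 2 ∧ G.mult x w = 2 ∧
    ∀ y : G.V, y ≠ u → y ≠ v → y ≠ w → G.mult x y = 0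

/-- Multiplicity function of the result of a Δ-YY transformation on the
delta `u, v, w`; the new vertex `x` is `none`. -/
def deltaMult (G : MG) (u v w : G.V) : Option G.V → Option G.V → ℕ
  | none, none => 0
  | none, some b => if b = u ∨ b = v ∨ b = w then 2 else 0
  | some a, none => if a = u ∨ a = v ∨ a = w then 2 else 0
  | some a, some b => G.mult a b - triCount u v w a b

/-- The result of the Δ-YY transformation on the delta `u, v, w`: one edge of
each of the connections `uv`, `uw`, `vw` is removed, a new vertex (`none`) is
added, joined by two parallel edges to each of `u, v, w`. -/
def deltaYY (G : MG) (u v w : G.V) : MG where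
  V := Option G.V
  fin := by haveI := G.fin; infer_instance
  mult := G.deltaMult u v w
  symm := by
    rintro (_ | a) (_ | b)
    · rfl
    · rfl
    · rfl
    · show G.mult a b - triCount u v w a b = G.mult b a - triCount u v w b a
      rw [G.symm a b, triCount_symm]
  loopless := by
    rintro (_ | a)
    · rfl
    · show G.mult a a - triCount u v w a a = 0
      rw [G.loopless]
      exact Nat.zero_sub _

/-- The result of the YY-Δ transformation on a wye with centre `x` and external
vertices `u, v, w`: the vertex `x` is deleted together with all its incident
edges, and one new edge is added to each of the connections `uv`, `uw`, `vw`. -/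
def yyDelta (G : MG) (x u v w : G.V) : MG where
  V := {y : G.V // y ≠ x}
  fin := by haveI := G.fin; infer_instance
  mult a b := if a = b then 0 else G.mult a.1 b.1 + triCount u v w a.1 b.1
  symm := by
    intro a b
    try dsimp only
    rcases eq_or_ne a b with h | h
    · subst h; rfl
    · rw [if_neg h, if_neg h.symm, G.symm a.1 b.1, triCount_symm]
  loopless := fun a => if_pos rfl

/-- `G'` is obtained from `G` by a Δ-YY transformation. -/
def DeltaYYStep (G G' : MG) : Prop :=
  ∃ u v w : G.V, G.IsDelta u v w ∧ Iso (G.deltaYY u v w) G'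

/-- `G'` is obtained from `G` by a YY-Δ transformation. -/
def YYDeltaStep (G G' : MG) : Prop :=
  ∃ x u v w : G.V, G.IsWye x u v w ∧ Iso (G.yyDelta x u v w) G'

/-- `G'` is obtained from `G` by a Δ-YY operation (either a Δ-YY transformation
or a YY-Δ transformation). -/
def Step (G G' : MG) : Prop := DeltaYYStep G G' ∨ YYDeltaStep G G'

/-- Δ-YY equivalence: `G` can be transformed into `H`, up to isomorphism, by a
finite sequence of Δ-YY operations. -/
def DYYEquiv : MG → MG → Prop :=
  Relation.EqvGen (fun G G' => Step G G' ∨ Iso G G')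

/-- The Δ-YY equivalence class of `G` contains only finitely many isomorphism
classes of multigraphs. -/
def FiniteClass (G : MG) : Prop :=
  ∃ S : Finset MG, ∀ H : MG, DYYEquiv G H → ∃ H' ∈ S, Iso H H'

/-- Connectivity: nonempty, and any two vertices are joined by a path. -/
def Connected (G : MG) : Prop :=
  Nonempty G.V ∧ ∀ u v : G.V, Relation.ReflTransGen G.Adj u v

/-- The multigraph obtained by deleting a set of vertices (and all edges
incident to them). -/
def deleteVerts (G : MG) (S : Set G.V) : MG where
  V := {y : G.V // y ∉ S}
  fin := by haveI := G.fin; infer_instance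
  mult a b := G.mult a.1 b.1
  symm := fun a b => G.symm a.1 b.1
  loopless := fun a => G.loopless a.1

/-- `G` is `k`-connected: it has more than `k` vertices and deleting any set of
fewer than `k` vertices leaves a connected multigraph. -/
def KConnected (G : MG) (k : ℕ) : Prop :=
  k < G.order ∧ ∀ S : Set G.V, S.ncard < k → (G.deleteVerts S).Connected

/-- `G` is planar: it has a drawing in the plane in which vertices are distinct
points, every edge (each parallel edge separately) is a continuous injective
arc joining the points of its endpoints, no arc passes through a vertex point
in its interior, and the interiors of the arcs of distinct edges are disjoint.
The arc of the `k`-th edge from `v` to `u` is the reverse of the arc of the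
`k`-th edge from `u` to `v` (they are the same edge drawn once). -/
def IsPlanar (G : MG) : Prop :=
  ∃ (pos : G.V → ℝ × ℝ) (γ : G.V → G.V → ℕ → C(unitInterval, ℝ × ℝ)),
    Function.Injective pos ∧
    (∀ u v k, k < G.mult u v →
      γ u v k 0 = pos u ∧ γ u v k 1 = pos v ∧ Function.Injective (γ u v k)) ∧
    (∀ u v k (t : unitInterval), γ v u k t = γ u v k (unitInterval.symm t)) ∧
    (∀ u v k, k < G.mult u v → ∀ t : unitInterval, t ≠ 0 → t ≠ 1 →
      ∀ z : G.V, γ u v k t ≠ pos z) ∧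
    (∀ u v k u' v' k', k < G.mult u v → k' < G.mult u' v' →
      (s(u, v) ≠ s(u', v') ∨ k ≠ k') →
      ∀ t t' : unitInterval, t ≠ 0 → t ≠ 1 → t' ≠ 0 → t' ≠ 1 →
        γ u v k t ≠ γ u' v' k' t')

/-- An independent set: no two of its vertices are adjacent. -/
def IsIndepSet (G : MG) (S : Set G.V) : Prop :=
  ∀ u ∈ S, ∀ v ∈ S, ¬ G.Adj u v

/-- The independence number `α(G)`: the maximum size of an independent set. -/
def indepNum (G : MG) : ℕ :=
  sSup {n | ∃ S : Set G.V, G.IsIndepSet S ∧ S.ncard = n}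

/-- The number of non-empty connections, i.e. the number of edges of the
simplification `G^S`. -/
def numConn (G : MG) : ℕ := {p : Sym2 G.V | G.multS p ≠ 0}.ncard

/-- The cyclomatic number `m - n + 1` of the simplification `G^S` of `G`. -/
def cyclomaticS (G : MG) : ℤ := (G.numConn : ℤ) - (G.order : ℤ) + 1

/-- `AddOnAt G a S` : the vertex set `S` of `G` carries (a subgraph copy of) an
add-on whose addition vertex is `a`.  An add-on of length 0 is a double edge or
a delta; an add-on of length `n ≥ 1` is a 4-cycle `a b c d` with the
connections `ab`, `ad` of size 1 and `bc`, `cd` of size 2, glued at `c` to an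
add-on of length `n - 1`. -/
inductive AddOnAt (G : MG) : G.V → Set G.V → Prop
  | double (a b : G.V) : a ≠ b → 2 ≤ G.mult a b → AddOnAt G a {a, b}
  | delta (a b c : G.V) : a ≠ b → a ≠ c → b ≠ c →
      1 ≤ G.mult a b → 1 ≤ G.mult a c → 1 ≤ G.mult b c → AddOnAt G a {a, b, c}
  | link (a b c d : G.V) (S : Set G.V) :
      a ≠ b → a ≠ c → a ≠ d → b ≠ c → b ≠ d → c ≠ d →
      1 ≤ G.mult a b → 1 ≤ G.mult a d → 2 ≤ G.mult b c → 2 ≤ G.mult c d →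
      AddOnAt G c S → S ∩ {a, b, d} = ∅ → AddOnAt G a ({a, b, d} ∪ S)

/-- `G` contains one of the four families of excluded subgraphs. -/
def HasExcluded (G : MG) : Prop :=
  -- (1) a 3-cycle in which at least one connection has size at least 2
  (∃ a b c : G.V, a ≠ b ∧ a ≠ c ∧ b ≠ c ∧
      2 ≤ G.mult a b ∧ 1 ≤ G.mult a c ∧ 1 ≤ G.mult b c) ∨
  -- (2) a 4-cycle with at least three connections of size at least 2 and an
  -- add-on glued at a vertex incident to two of them
  (∃ a b c d : G.V, ∃ S : Set G.V,
      a ≠ b ∧ a ≠ c ∧ a ≠ d ∧ b ≠ c ∧ b ≠ d ∧ c ≠ d ∧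
      2 ≤ G.mult a b ∧ 2 ≤ G.mult b c ∧ 2 ≤ G.mult c d ∧ 1 ≤ G.mult d a ∧
      AddOnAt G b S ∧ S ∩ {a, c, d} = ∅) ∨
  -- (3) a 5-cycle with all connections of size at least 2 and add-ons glued at
  -- two non-adjacent vertices of the cycle
  (∃ v₀ v₁ v₂ v₃ v₄ : G.V, ∃ S T : Set G.V,
      v₀ ≠ v₁ ∧ v₀ ≠ v₂ ∧ v₀ ≠ v₃ ∧ v₀ ≠ v₄ ∧ v₁ ≠ v₂ ∧ v₁ ≠ v₃ ∧ v₁ ≠ v₄ ∧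
      v₂ ≠ v₃ ∧ v₂ ≠ v₄ ∧ v₃ ≠ v₄ ∧
      2 ≤ G.mult v₀ v₁ ∧ 2 ≤ G.mult v₁ v₂ ∧ 2 ≤ G.mult v₂ v₃ ∧
      2 ≤ G.mult v₃ v₄ ∧ 2 ≤ G.mult v₄ v₀ ∧
      AddOnAt G v₀ S ∧ AddOnAt G v₂ T ∧
      S ∩ {v₁, v₂, v₃, v₄} = ∅ ∧ T ∩ {v₀, v₁, v₃, v₄} = ∅ ∧ S ∩ T = ∅) ∨
  -- (4) a 4-cycle with three connections of size at least 2, whose fourth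
  -- connection has size 1 and lies in a triangle, with add-ons glued at both
  -- vertices of that connection
  (∃ a b c d e : G.V, ∃ S T : Set G.V,
      a ≠ b ∧ a ≠ c ∧ a ≠ d ∧ a ≠ e ∧ b ≠ c ∧ b ≠ d ∧ b ≠ e ∧
      c ≠ d ∧ c ≠ e ∧ d ≠ e ∧
      2 ≤ G.mult a b ∧ 2 ≤ G.mult b c ∧ 2 ≤ G.mult c d ∧ G.mult d a = 1 ∧
      1 ≤ G.mult d e ∧ 1 ≤ G.mult e a ∧
      AddOnAt G a S ∧ AddOnAt G d T ∧
      S ∩ {b, c, d, e} = ∅ ∧ T ∩ {a, b, c, e} = ∅ ∧ S ∩ T = ∅)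

/-- The doubling of a simple graph: every edge is replaced by a connection of
size 2. -/
def doubling {V : Type} [Fintype V] (H : SimpleGraph V) : MG where
  V := V
  fin := inferInstance
  mult u v := if H.Adj u v then 2 else 0
  symm := by
    intro u v
    try dsimp only
    by_cases h : H.Adj u v
    · rw [if_pos h, if_pos h.symm]
    · rw [if_neg h, if_neg fun h' => h h'.symm]
  loopless := fun v => if_neg (H.loopless.irrefl v)

end MG

end

namespace MG

lemma indep_set_nonempty (G : MG) :
    ∃ S : Set G.V, G.IsIndepSet S ∧ S.ncard = 0 :=
  ⟨∅, fun u hu => absurd hu (Set.notMem_empty u), by simp⟩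

lemma indep_bddAbove (G : MG) :
    BddAbove {n | ∃ S : Set G.V, G.IsIndepSet S ∧ S.ncard = n} := by
  haveI := G.fin
  refine ⟨Fintype.card G.V, ?_⟩
  rintro n ⟨S, -, rfl⟩
  have := Set.ncard_le_ncard (Set.subset_univ S) Set.finite_univ
  simpa [Set.ncard_univ, Nat.card_eq_fintype_card] using this

lemma le_indepNum (G : MG) {S : Set G.V} (h : G.IsIndepSet S) :
    S.ncard ≤ G.indepNum :=
  le_csSup G.indep_bddAbove ⟨S, h, rfl⟩

lemma indepNum_le (G : MG) {m : ℕ}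
    (h : ∀ S : Set G.V, G.IsIndepSet S → S.ncard ≤ m) : G.indepNum ≤ m := by
  refine csSup_le ⟨0, G.indep_set_nonempty⟩ ?_
  rintro n ⟨S, hS, rfl⟩
  exact h S hS

lemma indepNum_le_of_map (G H : MG) (f : G.V → H.V)
    (hf : Function.Injective f)
    (hadj : ∀ a b, H.Adj (f a) (f b) → G.Adj a b) :
    G.indepNum ≤ H.indepNum := by
  refine G.indepNum_le fun S hS => ?_
  have hind : H.IsIndepSet (f '' S) := by
    rintro - ⟨a, ha, rfl⟩ - ⟨b, hb, rfl⟩ hAdj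
    exact hS a ha b hb (hadj a b hAdj)
  calc S.ncard = (f '' S).ncard := (Set.ncard_image_of_injective S hf).symm
    _ ≤ H.indepNum := H.le_indepNum hind

lemma indepNum_eq_of_iso (G H : MG) (h : Iso G H) :
    G.indepNum = H.indepNum := by
  obtain ⟨e, he⟩ := h
  refine le_antisymm ?_ ?_
  · refine indepNum_le_of_map G H e e.injective fun a b hAdj => ?_
    unfold Adj at hAdj ⊢
    rwa [he] at hAdj
  · refine indepNum_le_of_map H G e.symm e.symm.injective fun a b hAdj => ?_
    unfold Adj at hAdj ⊢
    have := he (e.symm a) (e.symm b)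
    simp only [Equiv.apply_symm_apply] at this
    rw [this]; exact hAdj

lemma stmt_2_aux (G : MG) (u v w : G.V) (hΔ : G.IsDelta u v w) :
    G.indepNum ≤ (G.deltaYY u v w).indepNum ∧
      (G.deltaYY u v w).indepNum ≤ G.indepNum + 2 := by
  haveI := G.fin
  set H := G.deltaYY u v w with hH
  obtain ⟨huv, huw, hvw, hauv, hauw, havw⟩ := hΔ
  have hmult : ∀ a b : G.V, H.mult (some a) (some b)
      = G.mult a b - triCount u v w a b := fun a b => rfl
  have hmultn : ∀ b : G.V, H.mult none (some b)
      = if b = u ∨ b = v ∨ b = w then 2 else 0 := fun b => rfl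
  constructor
  · refine indepNum_le_of_map G H some (Option.some_injective _) fun a b hAdj => ?_
    have : 0 < G.mult a b - triCount u v w a b := hAdj
    exact lt_of_lt_of_le this (Nat.sub_le _ _)
  · refine H.indepNum_le fun T hT => ?_
    set T' : Set G.V := {a : G.V | some a ∈ T} with hT'
    by_cases hnone : (none : Option G.V) ∈ T
    · -- none ∈ T : then u,v,w ∉ T', and T' is independent
      have hmemuvw : ∀ a : G.V, a = u ∨ a = v ∨ a = w → a ∉ T' := by
        intro a hor ha
        refine hT none hnone (some a) ha ?_
        show 0 < H.mult none (some a)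
        rw [hmultn, if_pos hor]; norm_num
      have hind : G.IsIndepSet T' := by
        intro a ha b hb hAdj
        refine hT (some a) ha (some b) hb ?_
        show 0 < G.mult a b - triCount u v w a b
        have htri : triCount u v w a b = 0 := by
          unfold triCount
          rw [if_neg]
          intro hmem
          simp only [Set.mem_insert_iff, Set.mem_singleton_iff, Sym2.eq_iff] at hmem
          rcases hmem with (⟨rfl, rfl⟩ | ⟨rfl, rfl⟩) | (⟨rfl, rfl⟩ | ⟨rfl, rfl⟩) |
            (⟨rfl, rfl⟩ | ⟨rfl, rfl⟩)
          · exact hmemuvw a (Or.inl rfl) ha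
          · exact hmemuvw a (Or.inr (Or.inl rfl)) ha
          · exact hmemuvw a (Or.inl rfl) ha
          · exact hmemuvw a (Or.inr (Or.inr rfl)) ha
          · exact hmemuvw a (Or.inr (Or.inl rfl)) ha
          · exact hmemuvw a (Or.inr (Or.inr rfl)) ha
        rw [htri]
        exact hAdj
      have hsub : T ⊆ insert none (some '' T') := by
        rintro (_ | a) ha
        · exact Set.mem_insert _ _
        · exact Set.mem_insert_of_mem _ ⟨a, ha, rfl⟩
      haveI : Fintype (Option G.V) := H.fin
      calc T.ncard ≤ (insert (none : Option G.V) (some '' T')).ncard :=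
            Set.ncard_le_ncard hsub (Set.toFinite (α := Option G.V) _)
        _ ≤ (some '' T').ncard + 1 := Set.ncard_insert_le _ _
        _ = T'.ncard + 1 := by
            rw [Set.ncard_image_of_injective _ (Option.some_injective _)]
        _ ≤ G.indepNum + 1 := by
            have := G.le_indepNum hind
            omega
        _ ≤ G.indepNum + 2 := by omega
    · -- none ∉ T : remove u, v from T'
      have hTeq : T = some '' T' := by
        ext t
        constructor
        · intro ht
          match t with
          | none => exact absurd ht hnone
          | some a => exact ⟨a, ht, rfl⟩
        · rintro ⟨a, ha, rfl⟩; exact ha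
      set S : Set G.V := T' \ {u, v} with hS
      have hind : G.IsIndepSet S := by
        intro a ha b hb hAdj
        have hat : some a ∈ T := ha.1
        have hbt : some b ∈ T := hb.1
        have hnAdj : ¬ H.Adj (some a) (some b) := hT _ hat _ hbt
        have hsub0 : G.mult a b - triCount u v w a b = 0 := by
          by_contra hne
          exact hnAdj (Nat.pos_of_ne_zero hne)
        have hle : G.mult a b ≤ triCount u v w a b := Nat.sub_eq_zero_iff_le.mp hsub0
        have hpos : 0 < G.mult a b := hAdj
        have htri : triCount u v w a b = 1 := by
          unfold triCount at hle ⊢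
          by_cases hmem : s(a, b) ∈ ({s(u, v), s(u, w), s(v, w)} : Set (Sym2 G.V))
          · rw [if_pos hmem]
          · rw [if_neg hmem] at hle; omega
        have hmem : s(a, b) ∈ ({s(u, v), s(u, w), s(v, w)} : Set (Sym2 G.V)) := by
          unfold triCount at htri
          by_contra hmem
          rw [if_neg hmem] at htri
          exact absurd htri one_ne_zero.symm
        have hau : a ∉ ({u, v} : Set G.V) := ha.2
        have hbu : b ∉ ({u, v} : Set G.V) := hb.2
        simp only [Set.mem_insert_iff, Set.mem_singleton_iff, Sym2.eq_iff] at hmem hau hbu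
        push_neg at hau hbu
        rcases hmem with (⟨ha', hb'⟩ | ⟨ha', hb'⟩) | (⟨ha', hb'⟩ | ⟨ha', hb'⟩) |
          (⟨ha', hb'⟩ | ⟨ha', hb'⟩)
        · exact hau.1 ha'
        · exact hau.2 ha'
        · exact hau.1 ha'
        · exact hbu.1 hb'
        · exact hau.2 ha'
        · exact hbu.2 hb'
      have hsub : T' ⊆ S ∪ {u, v} := fun a ha => by
        by_cases h : a ∈ ({u, v} : Set G.V)
        · exact Set.mem_union_right _ h
        · exact Set.mem_union_left _ ⟨ha, h⟩
      calc T.ncard = T'.ncard := by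
            rw [hTeq]; exact Set.ncard_image_of_injective _ (Option.some_injective _)
        _ ≤ (S ∪ {u, v}).ncard := Set.ncard_le_ncard hsub (Set.toFinite _)
        _ ≤ S.ncard + ({u, v} : Set G.V).ncard := Set.ncard_union_le _ _
        _ ≤ S.ncard + 2 := by
            have : ({u, v} : Set G.V).ncard ≤ 2 := by
              apply le_trans (Set.ncard_insert_le _ _)
              simp
            omega
        _ ≤ G.indepNum + 2 := by
            have := G.le_indepNum hind
            omega

end MG

/-- If `G'` is obtained from `G` by a Δ-YY transformation then
`α(G) ≤ α(G') ≤ α(G) + 2`. -/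
theorem stmt_2 (G G' : MG) (h : MG.DeltaYYStep G G') :
    G.indepNum ≤ G'.indepNum ∧ G'.indepNum ≤ G.indepNum + 2 := by
  obtain ⟨u, v, w, hΔ, hiso⟩ := h
  have heq := MG.indepNum_eq_of_iso _ _ hiso
  have haux := MG.stmt_2_aux G u v w hΔ
  omega
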